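/- Let α > 0, β := α/(α+4), r > 0, and z ≠ 0 real. Then 1/r + (4/α)/sqrt(r² + (1+2α)z²) > (1/β)/sqrt(r² + (1+7β)z²). Equivalently, the potential V(r,z) := ϖ²/(2r²) - 1/r - (4/α)/sqrt(r² + (1+2α)z²) is strictly smaller than V₂(r,z) := ϖ²/(2r²) - (1/β)/sqrt(r² + (1+7β)z²) for all z ≠ 0, with equality at z = 0. -/

import Mathlib

/-- Key polynomial inequality: if `k * (A² - S²) = S² - r²` with `0 < r < S < A`, then
`(1+k)/S < 1/r + k/A`. -/
lemma stmt_17_key (k r S A : ℝ) (hk : 0 < k) (hr : 0 < r) (hrS : r < S) (hSA : S < A)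
    (h : k * (A ^ 2 - S ^ 2) = S ^ 2 - r ^ 2) : (1 + k) / S < 1 / r + k / A := by
  have hS : 0 < S := hr.trans hrS
  have hA : 0 < A := hS.trans hSA
  have hsum : 1 / r + k / A = (A + k * r) / (r * A) := by field_simp
  rw [hsum, div_lt_div_iff₀ hS (mul_pos hr hA)]
  have hfac : ((A + k * r) * S - (1 + k) * (r * A)) * (A ^ 2 - S ^ 2)
      = (A - S) * (S - r) * (A - r) * (A + r + S) := by
    linear_combination (r * (S - A)) * h
  have h1 : 0 < (A - S) * (S - r) * (A - r) * (A + r + S) :=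
    mul_pos (mul_pos (mul_pos (sub_pos.2 hSA) (sub_pos.2 hrS))
      (sub_pos.2 (hrS.trans hSA))) (by linarith)
  have h2 : 0 < A ^ 2 - S ^ 2 := by nlinarith
  nlinarith [hfac, h1, h2]

/-- Comparison of the potentials `V` and `V₂` of the isosceles three-body problem:
strict inequality for `z ≠ 0`, equality at `z = 0`. -/
theorem stmt_17 (α ϖ r z : ℝ) (hα : 0 < α) (hr : 0 < r) (hz : z ≠ 0) :
    let β := α / (α + 4)
    (1 / r + (4 / α) / Real.sqrt (r ^ 2 + (1 + 2 * α) * z ^ 2)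
        > (1 / β) / Real.sqrt (r ^ 2 + (1 + 7 * β) * z ^ 2)) ∧
    (ϖ ^ 2 / (2 * r ^ 2) - 1 / r - (4 / α) / Real.sqrt (r ^ 2 + (1 + 2 * α) * z ^ 2)
        < ϖ ^ 2 / (2 * r ^ 2) - (1 / β) / Real.sqrt (r ^ 2 + (1 + 7 * β) * z ^ 2)) ∧
    (ϖ ^ 2 / (2 * r ^ 2) - 1 / r - (4 / α) / Real.sqrt (r ^ 2 + (1 + 2 * α) * (0:ℝ) ^ 2)
        = ϖ ^ 2 / (2 * r ^ 2) - (1 / β) / Real.sqrt (r ^ 2 + (1 + 7 * β) * (0:ℝ) ^ 2)) := by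
  intro β
  have hα4 : 0 < α + 4 := by linarith
  have hβ : 0 < β := div_pos hα hα4
  have ht : 0 < z ^ 2 := by positivity
  have hβ7 : 0 < 1 + 7 * β := by positivity
  have hb : β * (α + 4) = α := by
    rw [show β = α / (α + 4) from rfl]; field_simp
  have hba : 1 + 7 * β < 1 + 2 * α := by
    nlinarith [mul_pos hβ (show (0:ℝ) < 2 * α + 1 by linarith), hb]
  set S := Real.sqrt (r ^ 2 + (1 + 7 * β) * z ^ 2) with hSdef
  set A := Real.sqrt (r ^ 2 + (1 + 2 * α) * z ^ 2) with hAdef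
  have hS2 : S ^ 2 = r ^ 2 + (1 + 7 * β) * z ^ 2 := Real.sq_sqrt (by positivity)
  have hA2 : A ^ 2 = r ^ 2 + (1 + 2 * α) * z ^ 2 := Real.sq_sqrt (by positivity)
  have hrS : r < S := by
    have : r ^ 2 < S ^ 2 := by rw [hS2]; nlinarith
    nlinarith [Real.sqrt_nonneg (r ^ 2 + (1 + 7 * β) * z ^ 2)]
  have hSA : S < A := by
    have h2 : S ^ 2 < A ^ 2 := by rw [hS2, hA2]; nlinarith
    nlinarith [Real.sqrt_nonneg (r ^ 2 + (1 + 7 * β) * z ^ 2),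
      Real.sqrt_nonneg (r ^ 2 + (1 + 2 * α) * z ^ 2)]
  have hk : (0:ℝ) < 4 / α := by positivity
  have hcons : (4 / α) * (A ^ 2 - S ^ 2) = S ^ 2 - r ^ 2 := by
    rw [hS2, hA2]
    have hβeq : β = α / (α + 4) := rfl
    field_simp [hβeq]
    linear_combination (-7 * z ^ 2) * hb
  have hβinv : 1 / β = 1 + 4 / α := by
    rw [show β = α / (α + 4) from rfl]
    field_simp
  have hmain : (1 / β) / S < 1 / r + (4 / α) / A := by
    rw [hβinv]
    exact stmt_17_key (4 / α) r S A hk hr hrS hSA hcons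
  refine ⟨hmain, by linarith, ?_⟩
  have h0 : Real.sqrt (r ^ 2 + (1 + 2 * α) * (0:ℝ) ^ 2) = r := by
    simp [Real.sqrt_sq hr.le]
  have h0' : Real.sqrt (r ^ 2 + (1 + 7 * β) * (0:ℝ) ^ 2) = r := by
    simp [Real.sqrt_sq hr.le]
  rw [h0, h0', hβinv]
  field_simp
  ring
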